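/- arXiv:0904.0679 — 2 statements merged into one kernel-verified Lean document; each statement's English description precedes it below -/
import Mathlib

section
/- Let f be a quasi-polynomial of degree d with coefficient functions c_i of period s_i, and let a, b be positive integers. Define F(t) = ∑_{i=0}^{⌊at/b⌋} f(i) for nonnegative integers t. Then F agrees with a quasi-polynomial of degree d+1 whose t^{d+1} coefficient is constant (period 1), and whose t^i coefficient, for 0 ≤ i ≤ d, has period dividing lcm{S_d, S_{d-1}, ..., S_i}, where S_i = s_i·b/gcd(s_i, a). -/
open Finset Polynomial

private lemma per_mul' {g : ℤ → ℚ} {N : ℕ} (hg : ∀ t : ℤ, g (t + N) = g t) :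
    ∀ (k : ℕ) (t : ℤ), g (t + (N : ℤ) * k) = g t := by
  intro k
  induction k with
  | zero => simp
  | succ k ih =>
    intro t
    have h : t + (N : ℤ) * (k + 1 : ℕ) = (t + N * k) + N := by push_cast; ring
    rw [h, hg, ih]

private lemma sum_shift' {N : ℕ} (g : ℤ → ℚ) (hg : ∀ t : ℤ, g (t + N) = g t) :
    ∀ t : ℤ, ∑ w ∈ Finset.range N, g (t + w) = ∑ w ∈ Finset.range N, g w := by
  have step : ∀ t : ℤ, ∑ w ∈ Finset.range N, g (t + 1 + w) = ∑ w ∈ Finset.range N, g (t + w) := by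
    intro t
    have h1 : ∑ w ∈ Finset.range (N + 1), g (t + w)
        = (∑ w ∈ Finset.range N, g (t + w)) + g (t + N) := Finset.sum_range_succ _ _
    have h2 : ∑ w ∈ Finset.range (N + 1), g (t + w)
        = (∑ w ∈ Finset.range N, g (t + (w + 1 : ℕ))) + g (t + (0 : ℕ)) := by
      rw [Finset.sum_range_succ']
    have h3 : ∀ w : ℕ, g (t + (w + 1 : ℕ)) = g (t + 1 + w) := by
      intro w; congr 1; push_cast; ring
    simp only [h3] at h2
    have h4 := h1.symm.trans h2
    rw [hg] at h4
    simp only [Nat.cast_zero, add_zero] at h4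
    linarith [h4]
  intro t
  induction t using Int.induction_on with
  | zero => simp
  | succ k ih => rw [show ((k : ℤ) + 1) = (k : ℤ) + 1 from rfl, step, ih]
  | pred k ih =>
    have h5 := step (-(k : ℤ) - 1)
    simp only [sub_add_cancel] at h5
    rw [← h5, ih]

/-- The quasi-polynomial structure of the partial sums of `g(n) * n^i`. -/
private lemma lemma1 (N : ℕ) (hN : 0 < N) (g : ℤ → ℚ) (hg : ∀ t : ℤ, g (t + N) = g t) (i : ℕ) :
    ∃ E : ℕ → ℤ → ℚ,
      (∀ m : ℕ, ∑ n ∈ Finset.range (m + 1), g n * (n : ℚ) ^ i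
          = ∑ j ∈ Finset.range (i + 2), E j m * (m : ℚ) ^ j) ∧
      (∀ t u : ℤ, E (i + 1) t = E (i + 1) u) ∧
      (∀ j ≤ i, ∀ t : ℤ, E j (t + N) = E j t) := by
  classical
  have hNQ : (N : ℚ) ≠ 0 := Nat.cast_ne_zero.2 hN.ne'
  set P : ℕ → ℚ := fun m => ∑ n ∈ Finset.range (m + 1), g n * (n : ℚ) ^ i with hPdef
  -- window polynomial
  set u : ℕ → Polynomial ℚ := fun r =>
    ∑ w ∈ Finset.range N, C (g ((r : ℤ) + 1 + w)) * (C (N : ℚ) * X + C ((r : ℚ) + 1 + w)) ^ i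
    with hudef
  have hueval : ∀ (r : ℕ) (x : ℚ),
      (u r).eval x = ∑ w ∈ Finset.range N, g ((r : ℤ) + 1 + w) * ((N : ℚ) * x + ((r : ℚ) + 1 + w)) ^ i := by
    intro r x
    simp [hudef, eval_finset_sum]
  have hudeg : ∀ r, (u r).natDegree ≤ i := by
    intro r
    refine Polynomial.natDegree_sum_le_of_forall_le _ _ fun w _ => ?_
    refine (Polynomial.natDegree_C_mul_le _ _).trans ?_
    refine (Polynomial.natDegree_pow_le).trans ?_
    calc i * (C (N : ℚ) * X + C ((r : ℚ) + 1 + w)).natDegree ≤ i * 1 :=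
          Nat.mul_le_mul_left _ Polynomial.natDegree_linear_le
      _ = i := Nat.mul_one i
  have hucoeff : ∀ r, (u r).coeff i = (N : ℚ) ^ i * ∑ w ∈ Finset.range N, g w := by
    intro r
    have hlin : ∀ w : ℕ, ((C (N : ℚ) * X + C ((r : ℚ) + 1 + w)) ^ i).coeff i = (N : ℚ) ^ i := by
      intro w
      have hdeg1 : (C (N : ℚ) * X + C ((r : ℚ) + 1 + w)).natDegree = 1 :=
        Polynomial.natDegree_linear hNQ
      have hdegp : ((C (N : ℚ) * X + C ((r : ℚ) + 1 + w)) ^ i).natDegree = i := by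
        rw [Polynomial.natDegree_pow, hdeg1, mul_one]
      have := Polynomial.coeff_natDegree (p := (C (N : ℚ) * X + C ((r : ℚ) + 1 + w)) ^ i)
      rw [hdegp] at this
      rw [this, Polynomial.leadingCoeff_pow, Polynomial.leadingCoeff_linear hNQ]
    rw [hudef]
    simp only [Polynomial.finset_sum_coeff, Polynomial.coeff_C_mul, hlin]
    rw [← Finset.sum_mul, mul_comm]
    congr 1
    have := sum_shift' g hg ((r : ℤ) + 1)
    simpa using this
  -- Faulhaber polynomials
  set V : ℕ → Polynomial ℚ := fun p =>
    ∑ ι ∈ Finset.range (p + 1), C (_root_.bernoulli ι * ((p + 1).choose ι) / (p + 1)) * X ^ (p + 1 - ι)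
    with hVdef
  have hVeval : ∀ (p q : ℕ), (V p).eval (q : ℚ) = ∑ k ∈ Finset.range q, (k : ℚ) ^ p := by
    intro p q
    rw [sum_range_pow q p, hVdef]
    simp only [eval_finset_sum, eval_mul, eval_C, eval_pow, eval_X]
    exact Finset.sum_congr rfl fun ι _ => by ring
  have hVdeg : ∀ p, (V p).natDegree ≤ p + 1 := by
    intro p
    refine Polynomial.natDegree_sum_le_of_forall_le _ _ fun ι _ => ?_
    refine (Polynomial.natDegree_C_mul_le _ _).trans ?_
    simpa using Nat.sub_le (p + 1) ι
  have hVcoeff : ∀ p, (V p).coeff (p + 1) = 1 / (p + 1) := by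
    intro p
    rw [hVdef]
    simp only [Polynomial.finset_sum_coeff, Polynomial.coeff_C_mul, Polynomial.coeff_X_pow]
    rw [Finset.sum_eq_single 0]
    · simp
    · intro ι hι hι0
      rw [if_neg, mul_zero]
      intro h
      simp only [Finset.mem_range] at hι
      omega
    · intro h; simp at h
  -- discrete antiderivative
  set U : ℕ → Polynomial ℚ := fun r => ∑ p ∈ Finset.range (i + 1), C ((u r).coeff p) * V p
    with hUdef
  have hUeval : ∀ (r q : ℕ), (U r).eval (q : ℚ) = ∑ k ∈ Finset.range q, (u r).eval (k : ℚ) := by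
    intro r q
    have h1 : ∀ k : ℕ, (u r).eval (k : ℚ)
        = ∑ p ∈ Finset.range (i + 1), (u r).coeff p * (k : ℚ) ^ p := fun k =>
      Polynomial.eval_eq_sum_range' (Nat.lt_succ_of_le (hudeg r)) _
    simp only [h1]
    rw [Finset.sum_comm]
    rw [hUdef]
    simp only [eval_finset_sum, eval_mul, eval_C]
    refine Finset.sum_congr rfl fun p _ => ?_
    rw [hVeval, Finset.mul_sum]
  have hUdeg : ∀ r, (U r).natDegree ≤ i + 1 := by
    intro r
    refine Polynomial.natDegree_sum_le_of_forall_le _ _ fun p hp => ?_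
    refine (Polynomial.natDegree_C_mul_le _ _).trans ?_
    exact (hVdeg p).trans (by simp only [Finset.mem_range] at hp; omega)
  have hUcoeff : ∀ r, (U r).coeff (i + 1) = (u r).coeff i * (1 / ((i : ℚ) + 1)) := by
    intro r
    rw [hUdef]
    simp only [Polynomial.finset_sum_coeff, Polynomial.coeff_C_mul]
    rw [Finset.sum_eq_single i]
    · rw [hVcoeff i]
    · intro p hp hpi
      have : (V p).coeff (i + 1) = 0 := by
        refine Polynomial.coeff_eq_zero_of_natDegree_lt ?_
        refine lt_of_le_of_lt (hVdeg p) ?_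
        simp only [Finset.mem_range] at hp
        omega
      rw [this, mul_zero]
    · intro h; simp at h
  -- telescoping
  have htel : ∀ (r q : ℕ), P (N * q + r) = P r + ∑ k ∈ Finset.range q, (u r).eval (k : ℚ) := by
    intro r q
    induction q with
    | zero => simp
    | succ q ih =>
      have hq1 : N * (q + 1) + r = (N * q + r) + N := by rw [Nat.mul_succ]; omega
      rw [hq1]
      have hsplit : P (N * q + r + N)
          = P (N * q + r) + ∑ n ∈ Finset.Ico (N * q + r + 1) (N * q + r + N + 1),
              g n * (n : ℚ) ^ i := by
        simp only [hPdef, Finset.range_eq_Ico]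
        exact (Finset.sum_Ico_consecutive (fun n : ℕ => g n * (n : ℚ) ^ i)
          (Nat.zero_le _) (by omega)).symm
      have hwin : ∑ n ∈ Finset.Ico (N * q + r + 1) (N * q + r + N + 1), g n * (n : ℚ) ^ i
          = (u r).eval (q : ℚ) := by
        rw [Finset.sum_Ico_eq_sum_range]
        have hsize : N * q + r + N + 1 - (N * q + r + 1) = N := by omega
        rw [hsize, hueval]
        refine Finset.sum_congr rfl fun w hw => ?_
        have hgarg : g ((N * q + r + 1 + w : ℕ) : ℤ) = g ((r : ℤ) + 1 + w) := by
          have : ((N * q + r + 1 + w : ℕ) : ℤ) = ((r : ℤ) + 1 + w) + (N : ℤ) * q := by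
            push_cast; ring
          rw [this, per_mul' hg q]
        rw [hgarg]
        congr 1
        push_cast; ring
      rw [hsplit, hwin, ih, Finset.sum_range_succ, add_assoc]
  -- the polynomial for each residue class
  set p : ℕ → Polynomial ℚ := fun r =>
    C (P r) + (U r).comp (C (1 / (N : ℚ)) * X + C (-(r : ℚ) / N)) with hpdef
  have hinner_deg : ∀ r : ℕ, (C (1 / (N : ℚ)) * X + C (-(r : ℚ) / N)).natDegree = 1 :=
    fun r => Polynomial.natDegree_linear (one_div_ne_zero hNQ)
  have hpdeg : ∀ r, (p r).natDegree ≤ i + 1 := by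
    intro r
    refine (Polynomial.natDegree_add_le _ _).trans ?_
    rw [max_le_iff]
    constructor
    · simp
    · rw [Polynomial.natDegree_comp, hinner_deg, mul_one]
      exact hUdeg r
  have hpcoeff : ∀ r, (p r).coeff (i + 1)
      = (N : ℚ) ^ i * (∑ w ∈ Finset.range N, g w) * (1 / ((i : ℚ) + 1)) * (1 / (N : ℚ)) ^ (i + 1) := by
    intro r
    have hcomp : ((U r).comp (C (1 / (N : ℚ)) * X + C (-(r : ℚ) / N))).coeff (i + 1)
        = (U r).coeff (i + 1) * (1 / (N : ℚ)) ^ (i + 1) := by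
      rcases lt_or_eq_of_le (hUdeg r) with h | h
      · have h1 : ((U r).comp (C (1 / (N : ℚ)) * X + C (-(r : ℚ) / N))).natDegree < i + 1 := by
          rw [Polynomial.natDegree_comp, hinner_deg, mul_one]; exact h
        rw [Polynomial.coeff_eq_zero_of_natDegree_lt h1,
          Polynomial.coeff_eq_zero_of_natDegree_lt h, zero_mul]
      · have hdc : ((U r).comp (C (1 / (N : ℚ)) * X + C (-(r : ℚ) / N))).natDegree = i + 1 := by
          rw [Polynomial.natDegree_comp, hinner_deg, mul_one]; exact h
        calc ((U r).comp _).coeff (i + 1)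
            = ((U r).comp (C (1 / (N : ℚ)) * X + C (-(r : ℚ) / N))).leadingCoeff := by
              rw [Polynomial.leadingCoeff, hdc]
          _ = (U r).leadingCoeff * (C (1 / (N : ℚ)) * X + C (-(r : ℚ) / N)).leadingCoeff
                ^ (U r).natDegree := Polynomial.leadingCoeff_comp (by rw [hinner_deg]; omega)
          _ = (U r).coeff (i + 1) * (1 / (N : ℚ)) ^ (i + 1) := by
              rw [Polynomial.leadingCoeff, h, Polynomial.leadingCoeff_linear (one_div_ne_zero hNQ)]
    rw [hpdef]
    simp only [Polynomial.coeff_add, Polynomial.coeff_C, if_neg (Nat.succ_ne_zero i), zero_add]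
    rw [hcomp, hUcoeff, hucoeff]
  have hpeval : ∀ m : ℕ, (p (m % N)).eval (m : ℚ) = P m := by
    intro m
    have hm : N * (m / N) + m % N = m := Nat.div_add_mod m N
    have hinner : Polynomial.eval (m : ℚ) (C (1 / (N : ℚ)) * X + C (-((m % N : ℕ) : ℚ) / N))
        = ((m / N : ℕ) : ℚ) := by
      simp only [eval_add, eval_mul, eval_C, eval_X]
      have : (m : ℚ) = N * ((m / N : ℕ) : ℚ) + ((m % N : ℕ) : ℚ) := by
        exact_mod_cast congrArg (fun x : ℕ => (x : ℚ)) hm.symm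
      rw [this]
      field_simp
      ring
    simp only [hpdef]
    rw [Polynomial.eval_add, Polynomial.eval_C, Polynomial.eval_comp, hinner, hUeval,
      ← htel (m % N) (m / N), hm]
  -- assemble
  refine ⟨fun j t => if j = i + 1
      then (N : ℚ) ^ i * (∑ w ∈ Finset.range N, g w) * (1 / ((i : ℚ) + 1)) * (1 / (N : ℚ)) ^ (i + 1)
      else (p (t % (N : ℤ)).toNat).coeff j, ?_, ?_, ?_⟩
  · intro m
    have htoNat : (((m : ℤ) % (N : ℤ)).toNat) = m % N := by
      rw [← Int.natCast_emod, Int.toNat_natCast]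
    have : ∀ j ∈ Finset.range (i + 2),
        (if j = i + 1 then (N : ℚ) ^ i * (∑ w ∈ Finset.range N, g w) * (1 / ((i : ℚ) + 1))
            * (1 / (N : ℚ)) ^ (i + 1)
          else (p (((m : ℤ) % (N : ℤ)).toNat)).coeff j) * (m : ℚ) ^ j
        = (p (m % N)).coeff j * (m : ℚ) ^ j := by
      intro j _
      by_cases hj : j = i + 1
      · rw [if_pos hj, hj, hpcoeff]
      · rw [if_neg hj, htoNat]
    rw [Finset.sum_congr rfl this, ← Polynomial.eval_eq_sum_range'
      (Nat.lt_succ_of_le (hpdeg (m % N))), hpeval]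
  · intro t u'
    simp
  · intro j hj t
    have hne : j ≠ i + 1 := by omega
    simp only [if_neg hne]
    congr 2
    simp [Int.add_mul_emod_self_right]


/-- Lemma on discrete integration of quasi-polynomials: if
`f(t) = c_0(t) + c_1(t)t + ⋯ + c_d(t)t^d` is a quasi-polynomial of degree `d`
with `c_i` periodic of period `s_i`, and `a, b` are positive integers, then
`F(t) = ∑_{i=0}^{⌊at/b⌋} f(i)` agrees (for nonnegative `t`) with a quasi-polynomial
`C_0(t) + ⋯ + C_{d+1}(t)t^{d+1}` of degree `d+1`, where `C_{d+1}` is constant and,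
for `0 ≤ i ≤ d`, `C_i` has period `lcm {S_d, …, S_i}` with `S_i = s_i·b/gcd(s_i, a)`. -/
theorem sum_quasiPolynomial (d : ℕ) (f : ℤ → ℚ) (c : ℕ → ℤ → ℚ) (s : ℕ → ℕ)
    (hs : ∀ i, 0 < s i)
    (hper : ∀ i, ∀ t : ℤ, c i (t + s i) = c i t)
    (hf : ∀ t : ℤ, f t = ∑ i ∈ Finset.range (d + 1), c i t * (t : ℚ) ^ i)
    (hdeg : ∃ t : ℤ, c d t ≠ 0)
    (a b : ℕ) (ha : 0 < a) (hb : 0 < b) :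
    ∃ C : ℕ → ℤ → ℚ,
      (∀ t : ℕ, (∑ i ∈ Finset.range (a * t / b + 1), f (i : ℤ)) =
        ∑ i ∈ Finset.range (d + 2), C i (t : ℤ) * (t : ℚ) ^ i) ∧
      (∀ t u : ℤ, C (d + 1) t = C (d + 1) u) ∧
      (∀ i ≤ d, ∀ t : ℤ,
        C i (t + ((Finset.Icc i d).lcm fun k => s k * b / Nat.gcd (s k) a)) = C i t) := by
  classical
  choose E hrep hconst hperE using fun i => lemma1 (s i) (hs i) (c i) (hper i) i
  set M : ℤ → ℤ := fun t => ((a : ℤ) * t) / b with hMdef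
  set R : ℤ → ℤ := fun t => ((a : ℤ) * t) % b with hRdef
  refine ⟨fun j t => ∑ i ∈ Finset.range (d + 1), ∑ j' ∈ Finset.range (i + 2),
      if j ≤ j' then E i j' (M t) * (1 / (b : ℚ)) ^ j' * (j'.choose j : ℚ) * (a : ℚ) ^ j
        * (-((R t : ℤ) : ℚ)) ^ (j' - j) else 0, ?_, ?_, ?_⟩
  · -- representation
    intro t
    have hMt : M (t : ℤ) = ((a * t / b : ℕ) : ℤ) := by
      simp only [hMdef]
      rw [Int.natCast_ediv]
      push_cast
      ring_nf
    have hRt : R (t : ℤ) = ((a * t % b : ℕ) : ℤ) := by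
      simp only [hRdef]
      rw [Int.natCast_emod]
      push_cast
      ring_nf
    have hmQ : ((a * t / b : ℕ) : ℚ) = ((a : ℚ) * t - ((a * t % b : ℕ) : ℚ)) / b := by
      have h0 : b * (a * t / b) + a * t % b = a * t := Nat.div_add_mod (a * t) b
      have hbQ : (b : ℚ) ≠ 0 := Nat.cast_ne_zero.2 hb.ne'
      field_simp
      have h2 := congrArg (fun x : ℕ => (x : ℚ)) h0
      push_cast at h2
      linarith [h2]
    have e1 : (∑ n ∈ Finset.range (a * t / b + 1), f (n : ℤ))
        = ∑ i ∈ Finset.range (d + 1), ∑ j' ∈ Finset.range (i + 2),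
            E i j' ((a * t / b : ℕ) : ℤ) * ((a * t / b : ℕ) : ℚ) ^ j' := by
      calc ∑ n ∈ Finset.range (a * t / b + 1), f (n : ℤ)
          = ∑ n ∈ Finset.range (a * t / b + 1), ∑ i ∈ Finset.range (d + 1),
              c i (n : ℤ) * ((n : ℕ) : ℚ) ^ i :=
            Finset.sum_congr rfl fun (n : ℕ) _ => hf (n : ℤ)
        _ = ∑ i ∈ Finset.range (d + 1), ∑ n ∈ Finset.range (a * t / b + 1),
              c i (n : ℤ) * ((n : ℕ) : ℚ) ^ i := Finset.sum_comm
        _ = ∑ i ∈ Finset.range (d + 1), ∑ j' ∈ Finset.range (i + 2),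
              E i j' ((a * t / b : ℕ) : ℤ) * ((a * t / b : ℕ) : ℚ) ^ j' :=
            Finset.sum_congr rfl fun i _ => hrep i (a * t / b)
    rw [e1]
    symm
    simp only [Finset.sum_mul, ite_mul, zero_mul]
    rw [Finset.sum_comm (s := Finset.range (d + 2)) (t := Finset.range (d + 1))]
    refine Finset.sum_congr rfl fun i hi => ?_
    rw [Finset.sum_comm (s := Finset.range (d + 2)) (t := Finset.range (i + 2))]
    refine Finset.sum_congr rfl fun j' hj' => ?_
    simp only [Finset.mem_range] at hi hj'
    rw [← Finset.sum_subset (Finset.range_subset_range.2 (by omega : j' + 1 ≤ d + 2))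
      (fun x _ hx => by rw [if_neg (by simp only [Finset.mem_range] at hx ⊢; omega)])]
    rw [Finset.sum_congr rfl fun j hj =>
      if_pos (by simp only [Finset.mem_range] at hj; omega : j ≤ j')]
    have hexp : (((a : ℚ) * t - ((a * t % b : ℕ) : ℚ)) / b) ^ j'
        = ∑ x ∈ Finset.range (j' + 1), (1 / (b : ℚ)) ^ j' * ((j'.choose x : ℕ) : ℚ)
            * (a : ℚ) ^ x * (-((a * t % b : ℕ) : ℚ)) ^ (j' - x) * (t : ℚ) ^ x := by
      rw [div_pow, sub_eq_add_neg, add_pow, Finset.sum_div]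
      refine Finset.sum_congr rfl fun x hx => ?_
      rw [div_eq_mul_inv, one_div]
      ring
    rw [hMt, hRt, hmQ, hexp, Finset.mul_sum]
    refine Finset.sum_congr rfl fun x hx => ?_
    simp only [Int.cast_natCast]
    ring
  · -- constancy of top coefficient
    intro t u
    refine Finset.sum_congr rfl fun i hi => Finset.sum_congr rfl fun j' hj' => ?_
    simp only [Finset.mem_range] at hi hj'
    by_cases h : d + 1 ≤ j'
    · rw [if_pos h, if_pos h]
      have hj'e : j' = i + 1 := by omega
      rw [show j' - (d + 1) = 0 from by omega, pow_zero, pow_zero, mul_one, mul_one,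
        hj'e, hconst i (M t) (M u)]
    · rw [if_neg h, if_neg h]
  · -- periodicity
    intro j hj t
    set L : ℕ := (Finset.Icc j d).lcm (fun k => s k * b / Nat.gcd (s k) a) with hLdef
    have hS : ∀ i, s i * b / Nat.gcd (s i) a = (s i / Nat.gcd (s i) a) * b := fun i => by
      rw [Nat.mul_comm (s i) b, Nat.mul_div_assoc b (Nat.gcd_dvd_left (s i) a), Nat.mul_comm]
    have hsl : ∀ i, s i ∣ a * (s i / Nat.gcd (s i) a) := fun i => by
      rw [← Nat.mul_div_assoc a (Nat.gcd_dvd_left (s i) a), ← Nat.gcd_comm, ← Nat.lcm]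
      exact Nat.dvd_lcm_right a (s i)
    have hSL : ∀ i, j ≤ i → i ≤ d → (s i / Nat.gcd (s i) a) * b ∣ L := fun i h1 h2 =>
      (hS i) ▸ Finset.dvd_lcm (Finset.mem_Icc.2 ⟨h1, h2⟩)
    have hbL : b ∣ L := dvd_trans (dvd_mul_left b (s j / Nat.gcd (s j) a)) (hSL j le_rfl hj)
    obtain ⟨L', hL'⟩ := hbL
    have hRper : R (t + (L : ℤ)) = R t := by
      simp only [hRdef]
      have h1 : (a : ℤ) * (t + L) = (a : ℤ) * t + (b : ℤ) * ((a : ℤ) * L') := by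
        rw [hL']; push_cast; ring
      rw [h1, Int.add_mul_emod_self_left]
    have hMper : M (t + (L : ℤ)) = M t + ((a * L' : ℕ) : ℤ) := by
      simp only [hMdef]
      have h1 : (a : ℤ) * (t + L) = (a : ℤ) * t + (b : ℤ) * ((a * L' : ℕ) : ℤ) := by
        rw [hL']; push_cast; ring
      rw [h1, Int.add_mul_ediv_left _ _ (by exact_mod_cast hb.ne' : (b : ℤ) ≠ 0)]
    have hdiv : ∀ i, j ≤ i → i ≤ d → s i ∣ a * L' := by
      intro i h1 h2
      obtain ⟨w, hw⟩ := hSL i h1 h2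
      have hL'w : L' = (s i / Nat.gcd (s i) a) * w :=
        Nat.eq_of_mul_eq_mul_left hb (by rw [← hL', hw]; ring)
      rw [hL'w, ← Nat.mul_assoc]
      exact Dvd.dvd.mul_right (hsl i) w
    refine Finset.sum_congr rfl fun i hi => Finset.sum_congr rfl fun j' hj' => ?_
    simp only [Finset.mem_range] at hi hj'
    by_cases hjj' : j ≤ j'
    · rw [if_pos hjj', if_pos hjj', hRper]
      rcases Nat.lt_or_ge j' (i + 1) with h | h
      · -- j' ≤ i : use periodicity of E i j'
        have hij : j ≤ i := by omega
        obtain ⟨k, hk⟩ := hdiv i hij (by omega)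
        have : M (t + (L : ℤ)) = M t + (s i : ℤ) * k := by
          rw [hMper, hk]; push_cast; ring
        rw [this, per_mul' (hperE i j' (by omega)) k (M t)]
      · -- j' = i + 1 : top coefficient is constant
        have hj'e : j' = i + 1 := by omega
        subst hj'e
        rw [hconst i (M (t + (L : ℤ))) (M t)]
    · rw [if_neg hjj', if_neg hjj']
end

section
/- If f: ℤ → ℚ is a quasi-polynomial, then the function F(t) = ∑_{i=0}^{t} f(i), defined for nonnegative integers t, agrees with a quasi-polynomial p(t) for all nonnegative integers t, and moreover p(−t) = −∑_{i=−t+1}^{−1} f(i) for all positive integers t. -/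
/-- A quasi-polynomial is a function `f : ℤ → ℚ` of the form
`f(t) = c_0(t) + c_1(t)t + ⋯ + c_d(t)t^d` with each `c_i` periodic. -/
def IsQuasiPolynomial (f : ℤ → ℚ) : Prop :=
  ∃ (d : ℕ) (c : ℕ → ℤ → ℚ) (s : ℕ → ℕ),
    (∀ i, 0 < s i) ∧ (∀ i, ∀ t : ℤ, c i (t + s i) = c i t) ∧
    ∀ t : ℤ, f t = ∑ i ∈ Finset.range (d + 1), c i t * (t : ℚ) ^ i

open Polynomial Finset

lemma periodic_int {α : Type*} (g : ℤ → α) (N : ℤ) (h : ∀ t, g (t + N) = g t) :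
    ∀ (k : ℤ) (t : ℤ), g (t + k * N) = g t := by
  intro k
  induction k using Int.induction_on with
  | zero => simp
  | succ n ih =>
      intro t
      have h1 : t + ((n : ℤ) + 1) * N = (t + n * N) + N := by ring
      rw [h1, h, ih]
  | pred n ih =>
      intro t
      have h1 : t + (-(n : ℤ) - 1) * N + N = t + (-(n : ℤ)) * N := by ring
      have h2 := h (t + (-(n : ℤ) - 1) * N)
      rw [h1] at h2
      rw [← h2, ih]

lemma periodic_nat_mul {α : Type*} (g : ℤ → α) (s : ℤ) (h : ∀ t, g (t + s) = g t) :
    ∀ (k : ℕ) (t : ℤ), g (t + s * k) = g t := by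
  intro k
  induction k with
  | zero => simp
  | succ n ih =>
      intro t
      have h1 : t + s * ((n : ℤ) + 1) = (t + s * n) + s := by ring
      push_cast
      rw [h1, h, ih]

def PolyFn (g : ℤ → ℚ) : Prop := ∃ Q : ℚ[X], ∀ m : ℤ, g m = Q.eval (m : ℚ)

lemma antideriv (Q : ℚ[X]) : ∃ H : ℚ[X], ∀ x : ℚ, H.eval (x + 1) - H.eval x = Q.eval x := by
  induction Q using Polynomial.induction_on with
  | C a => exact ⟨C a * X, by intro x; simp [mul_add]⟩
  | add p q hp hq =>
      obtain ⟨Hp, hHp⟩ := hp; obtain ⟨Hq, hHq⟩ := hq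
      refine ⟨Hp + Hq, fun x => ?_⟩
      have := hHp x; have := hHq x
      simp only [eval_add]
      linarith
  | monomial n a _ =>
      refine ⟨C (a / (n + 2)) * Polynomial.bernoulli (n + 2), fun x => ?_⟩
      have hb := Polynomial.bernoulli_eval_one_add (n + 2) x
      rw [add_comm 1 x] at hb
      have hne : ((n : ℚ) + 2) ≠ 0 := by positivity
      simp only [eval_mul, eval_C, eval_pow, eval_X, hb]
      have h2 : (n + 2 : ℕ) - 1 = n + 1 := rfl
      rw [h2]
      push_cast
      field_simp
      ring

lemma polyfn_of_step (g h : ℤ → ℚ) (hh : PolyFn h) (hstep : ∀ m : ℤ, g (m + 1) - g m = h m) :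
    PolyFn g := by
  obtain ⟨Q, hQ⟩ := hh
  obtain ⟨H, hH⟩ := antideriv Q
  have key : ∀ m : ℤ, g m - H.eval (m : ℚ) = g 0 - H.eval 0 := by
    intro m
    induction m using Int.induction_on with
    | zero => norm_num
    | succ n ih =>
        have h1 := hstep n
        have h2 := hH (n : ℚ)
        have h3 := hQ n
        push_cast at ih h1 h2 h3 ⊢
        linarith
    | pred n ih =>
        have h1 := hstep (-(n : ℤ) - 1)
        have h2 := hH ((-(n : ℤ) - 1 : ℤ) : ℚ)
        have h3 := hQ (-(n : ℤ) - 1)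
        have e1 : (-(n : ℤ) - 1) + 1 = -(n : ℤ) := by ring
        rw [e1] at h1
        push_cast at ih h1 h2 h3 ⊢
        rw [show -(n:ℚ) - 1 + 1 = -(n:ℚ) from by ring] at h2
        linarith
  refine ⟨H + C (g 0 - H.eval 0), fun m => ?_⟩
  have := key m
  simp only [eval_add, eval_C]
  linarith

lemma polyfn_sum (n : ℕ) (g : ℕ → ℤ → ℚ) (hg : ∀ j, PolyFn (g j)) :
    PolyFn (fun m => ∑ j ∈ range n, g j m) := by
  choose Q hQ using hg
  refine ⟨∑ j ∈ range n, Q j, fun m => ?_⟩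
  rw [eval_finset_sum]
  exact Finset.sum_congr rfl fun j _ => hQ j m

def QPP (f : ℤ → ℚ) : Prop :=
  ∃ N : ℕ, 0 < N ∧ ∃ P : ℤ → ℚ[X], (∀ t, P (t + N) = P t) ∧ ∀ t, f t = (P t).eval (t : ℚ)

lemma qpp_of_qp (f : ℤ → ℚ) (hf : IsQuasiPolynomial f) : QPP f := by
  obtain ⟨d, c, s, hs, hper, hrep⟩ := hf
  refine ⟨∏ i ∈ range (d + 1), s i, Finset.prod_pos (fun i _ => hs i),
    fun t => ∑ i ∈ range (d + 1), C (c i t) * X ^ i, ?_, ?_⟩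
  · intro t
    refine Finset.sum_congr rfl fun i hi => ?_
    obtain ⟨k, hk⟩ := Finset.dvd_prod_of_mem s hi
    have : c i (t + (s i : ℤ) * k) = c i t := periodic_nat_mul (c i) (s i) (hper i) k t
    rw [show ((∏ i ∈ range (d + 1), s i : ℕ) : ℤ) = (s i : ℤ) * k by
      rw [hk]; push_cast; ring]
    rw [this]
  · intro t
    rw [hrep t]
    simp [eval_finset_sum]

lemma qp_of_qpp (f : ℤ → ℚ) (hf : QPP f) : IsQuasiPolynomial f := by
  obtain ⟨N, hN, P, hper, hrep⟩ := hf
  have hNz : (N : ℤ) ≠ 0 := by exact_mod_cast hN.ne'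
  have hmod : ∀ t : ℤ, P t = P (t % N) := by
    intro t
    have := periodic_int P N hper (t / N) (t % N)
    rw [mul_comm, Int.emod_add_mul_ediv t N] at this
    exact this
  set d := (range N).sup (fun r => (P (r : ℤ)).natDegree) with hd
  have hdeg : ∀ t : ℤ, (P t).natDegree ≤ d := by
    intro t
    rw [hmod t]
    have h0 : 0 ≤ t % N := Int.emod_nonneg t hNz
    have h1 : t % N < N := Int.emod_lt_of_pos t (by exact_mod_cast hN)
    have h2 : (t % N).toNat < N := by omega
    have h3 : ((t % N).toNat : ℤ) = t % N := Int.toNat_of_nonneg h0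
    rw [← h3, hd]
    exact Finset.le_sup (s := Finset.range N) (f := fun r : ℕ => (P (r : ℤ)).natDegree)
      (Finset.mem_range.mpr h2)
  refine ⟨d, fun i t => (P t).coeff i, fun _ => N, fun _ => hN, ?_, ?_⟩
  · intro i t
    simp only []
    rw [hper]
  · intro t
    rw [hrep t, Polynomial.eval_eq_sum_range' (Nat.lt_succ_of_le (hdeg t))]

/-- Reciprocity for finite calculus: if `f` is a quasi-polynomial, then
`F(t) = ∑_{i=0}^t f(i)` agrees with a quasi-polynomial `p` for nonnegative integers `t`,
and `p(−t) = −∑_{i=−t+1}^{−1} f(i)` for all positive integers `t`. -/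
theorem finite_calculus_reciprocity (f : ℤ → ℚ) (hf : IsQuasiPolynomial f) :
    ∃ p : ℤ → ℚ, IsQuasiPolynomial p ∧
      (∀ t : ℕ, (∑ i ∈ Finset.range (t + 1), f (i : ℤ)) = p (t : ℤ)) ∧
      (∀ t : ℕ, 0 < t → p (-(t : ℤ)) = -∑ i ∈ Finset.Icc (-(t : ℤ) + 1) (-1 : ℤ), f i) := by
  obtain ⟨N, hN, P, hper, heval⟩ := qpp_of_qp f hf
  have hNz : ((N : ℚ)) ≠ 0 := by exact_mod_cast hN.ne'
  have hNzZ : ((N : ℤ)) ≠ 0 := by exact_mod_cast hN.ne'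
  set F : ℤ → ℚ :=
    fun t => (∑ i ∈ Finset.Icc (0 : ℤ) t, f i) - ∑ i ∈ Finset.Icc (t + 1) (-1 : ℤ), f i with hF
  -- the basic step property
  have hstep : ∀ t : ℤ, F (t + 1) = F t + f (t + 1) := by
    intro t
    rcases le_or_gt 0 t with h | h
    · have e1 : Finset.Icc (t + 1) (-1 : ℤ) = ∅ := Finset.Icc_eq_empty (by omega)
      have e2 : Finset.Icc (t + 1 + 1) (-1 : ℤ) = ∅ := Finset.Icc_eq_empty (by omega)
      have e3 : Finset.Icc (0 : ℤ) (t + 1) = insert (t + 1) (Finset.Icc 0 t) := by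
        ext x; simp only [Finset.mem_Icc, Finset.mem_insert]; omega
      have e4 : (t + 1) ∉ Finset.Icc (0 : ℤ) t := by simp
      simp only [hF, e1, e2, e3, Finset.sum_insert e4, Finset.sum_empty]
      ring
    · rcases eq_or_lt_of_le (by omega : t + 1 ≤ 0) with h2 | h2
      · have ht : t = -1 := by omega
        subst ht
        have e1 : Finset.Icc (0 : ℤ) (-1 : ℤ) = ∅ := Finset.Icc_eq_empty (by omega)
        have e3 : Finset.Icc (1 : ℤ) (-1 : ℤ) = ∅ := Finset.Icc_eq_empty (by omega)
        norm_num [hF, e1, e3]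
      · -- t + 1 < 0, i.e. t ≤ -2
        have e1 : Finset.Icc (0 : ℤ) t = ∅ := Finset.Icc_eq_empty (by omega)
        have e2 : Finset.Icc (0 : ℤ) (t + 1) = ∅ := Finset.Icc_eq_empty (by omega)
        have e3 : Finset.Icc (t + 1) (-1 : ℤ) = insert (t + 1) (Finset.Icc (t + 1 + 1) (-1)) := by
          ext x; simp only [Finset.mem_Icc, Finset.mem_insert]; omega
        have e4 : (t + 1) ∉ Finset.Icc (t + 1 + 1) (-1 : ℤ) := by simp
        simp only [hF, e1, e2, e3, Finset.sum_insert e4, Finset.sum_empty]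
        ring
  -- telescoping over n steps
  have htele : ∀ (n : ℕ) (x : ℤ), F (x + n) = F x + ∑ j ∈ Finset.range n, f (x + j + 1) := by
    intro n
    induction n with
    | zero => simp
    | succ m ih =>
        intro x
        have e1 : x + ((m : ℤ) + 1) = (x + m) + 1 := by ring
        push_cast
        rw [e1, hstep, ih, Finset.sum_range_succ]
        push_cast
        ring
  -- F on each residue class is polynomial
  have hgpoly : ∀ r : ℤ, ∃ Q : ℚ[X], ∀ m : ℤ, F ((N : ℤ) * m + r) = Q.eval (m : ℚ) := by
    intro r
    have hstep2 : ∀ m : ℤ, F ((N : ℤ) * (m + 1) + r) - F ((N : ℤ) * m + r) =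
        (fun m : ℤ => ∑ j ∈ Finset.range N,
          ((P (r + j + 1)).comp (C (N : ℚ) * X + C ((r : ℚ) + j + 1))).eval (m : ℚ)) m := by
      intro m
      have e1 : (N : ℤ) * (m + 1) + r = ((N : ℤ) * m + r) + (N : ℕ) := by push_cast; ring
      rw [e1, htele N ((N : ℤ) * m + r)]
      rw [add_sub_cancel_left]
      refine Finset.sum_congr rfl fun j hj => ?_
      have e2 : (N : ℤ) * m + r + j + 1 = (r + j + 1) + m * N := by ring
      rw [heval, e2, periodic_int P N hper m (r + j + 1)]
      rw [eval_comp]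
      simp only [eval_add, eval_mul, eval_C, eval_X]
      push_cast
      ring
    have hh : PolyFn (fun m : ℤ => ∑ j ∈ Finset.range N,
        ((P (r + j + 1)).comp (C (N : ℚ) * X + C ((r : ℚ) + j + 1))).eval (m : ℚ)) := by
      refine ⟨∑ j ∈ Finset.range N, (P (r + j + 1)).comp (C (N : ℚ) * X + C ((r : ℚ) + j + 1)),
        fun m => ?_⟩
      rw [eval_finset_sum]
    exact polyfn_of_step _ _ hh hstep2
  choose Q hQ using hgpoly
  -- assemble the quasi-polynomial for F
  have hFqpp : QPP F := by
    refine ⟨N, hN, fun t => (Q (t % N)).comp (C ((N : ℚ))⁻¹ * (X - C ((t % (N : ℤ) : ℤ) : ℚ))),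
      ?_, ?_⟩
    · intro t
      have e : (t + (N : ℤ)) % N = t % N := by
        simpa using Int.add_mul_emod_self_left (a := t) (b := (N : ℤ)) (c := 1)
      simp only [e]
    · intro t
      rw [eval_comp]
      have e1 : F t = (Q (t % N)).eval ((t / (N : ℤ) : ℤ) : ℚ) := by
        rw [← hQ (t % N) (t / N)]
        congr 1
        exact (Int.mul_ediv_add_emod t N).symm
      rw [e1]
      congr 1
      have e2 : (N : ℤ) * (t / N) = t - t % N := by
        have := Int.mul_ediv_add_emod t N
        omega
      have e3 : ((N : ℚ)) * ((t / (N : ℤ) : ℤ) : ℚ) = (t : ℚ) - ((t % (N : ℤ) : ℤ) : ℚ) := by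
        exact_mod_cast congrArg (fun z : ℤ => (z : ℚ)) e2
      simp only [eval_mul, eval_C, eval_sub, eval_X]
      field_simp
      linarith [e3]
  refine ⟨F, qp_of_qpp F hFqpp, ?_, ?_⟩
  · intro t
    induction t with
    | zero =>
        have e3 : Finset.Icc (1 : ℤ) (-1 : ℤ) = ∅ := Finset.Icc_eq_empty (by omega)
        norm_num [hF, e3]
    | succ m ih =>
        rw [Finset.sum_range_succ, ih]
        push_cast
        rw [hstep m]
  · intro t ht
    have e1 : Finset.Icc (0 : ℤ) (-(t : ℤ)) = ∅ := Finset.Icc_eq_empty (by omega)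
    simp only [hF, e1, Finset.sum_empty, zero_sub]
end
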